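/- Let η^{(1)}, ..., η^{(N)} be mutually independent environments, each satisfying (P.1)-(P.4), and such that the i-th environment satisfies the sprinkler condition (C.3) with activity rate ν_i and density range (a_i, b_i). Then the superposed environment η = (η^{(1)}, ..., η^{(N)}) satisfies the following adapted sprinkler condition: there exist constants c₆ > 0 and C₇ ≥ 4(log(20N) + 6Σ_i(b_i+1))/min_i ν_i such that for all ρ = (ρ₁,...,ρ_N) with ρ_i ∈ (a_i,b_i), and integers H, ℓ, k ≥ 1 with k ≥ C₇ and H ≥ 2ν_i ℓ k for all i: if for every 1 ≤ i ≤ N one has η'^{(i)}₀ ≼ η^{(i)}₀ on [−H,H], η^{(i)}₀([0,ℓ]) ≥ η'^{(i)}₀([0,ℓ]) + 1 and η'^{(i)}₀([−3ℓ+1,3ℓ]) ≤ 6(ρ_i+1)ℓ, then for any x ∈ {0,1} there is a coupling Q of η ~ P^{η₀} and η' ~ P^{η'₀} such that, with δ = c₆^{6(Σ_{i=1}^N(ρ_i+1))ℓ} and δ' = δ(p_∘(1−p_•))^{6(Σ_{i=1}^N(ρ_i+1))ℓ}: Q(there exists i with η^{(i)}_ℓ(x) > 0, and for all i, η'^{(i)}_ℓ(x)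 = 0) ≥ 2δ, and Q(union over i of the events {not [for all s ∈ [0,ℓ], η'^{(i)}_s ≼ η^{(i)}_s on [−H+2ν_i kℓ, H−2ν_i kℓ]]}) ≤ 20N e^{−k(min_i ν_i)ℓ/4} ≤ δ'. -/

import Mathlib

open MeasureTheory Filter Set

/-! ## Basic objects: configurations, trajectories, domination, couplings -/

/-- The space of particle configurations on `ℤ`. -/
abbrev Config : Type := ℤ → ℕ

/-- The space of (discrete-time) environment trajectories. -/
abbrev Traj : Type := ℕ → Config

/-- `η ≼ η'` on the integer interval `[a, b]`. -/
def DomOn (η η' : Config) (a b : ℤ) : Prop := ∀ x : ℤ, a ≤ x → x ≤ b → η x ≤ η' x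

/-- `η ≼ η'` on the set of integer points of the real interval `[a, b]`. -/
def DomOnR (η η' : Config) (a b : ℝ) : Prop :=
  ∀ x : ℤ, a ≤ (x : ℝ) → (x : ℝ) ≤ b → η x ≤ η' x

/-- `η([a,b]) = ∑_{x ∈ [a,b]} η(x)`. -/
noncomputable def sumIcc (η : Config) (a b : ℤ) : ℕ := ∑ x ∈ Finset.Icc a b, η x

/-- `Q` is a coupling of `μ₁` and `μ₂`. -/
def IsCoupling {A B : Type*} [MeasurableSpace A] [MeasurableSpace B]
    (μ₁ : Measure A) (μ₂ : Measure B) (Q : Measure (A × B)) : Prop :=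
  Q.map Prod.fst = μ₁ ∧ Q.map Prod.snd = μ₂

/-- The annealed law of the environment started from the stationary measure `μ ρ`. -/
noncomputable def Penv (P : Config → Measure Traj) (μ : ℝ → Measure Config) (ρ : ℝ) :
    Measure Traj :=
  (μ ρ).bind P

/-! ## The properties (P.1)-(P.4) -/

/-- (P.1): Markov property and invariance (the laws are probability measures, and the law of the
space-time shifted process is the corresponding mixture). -/
def MarkovProp (P : Config → Measure Traj) : Prop :=
  (∀ η₀ : Config, IsProbabilityMeasure (P η₀)) ∧
    ∀ (η₀ : Config) (s : ℕ) (x : ℤ),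
      (P η₀).map (fun tr : Traj => fun (t : ℕ) (y : ℤ) => tr (s + t) (x + y))
        = (P η₀).bind (fun tr : Traj => P (fun y => tr s (x + y)))

/-- (P.2): each `μ ρ`, `ρ ∈ J`, is a stationary distribution. -/
def StationaryProp (P : Config → Measure Traj) (μ : ℝ → Measure Config) (J : Set ℝ) : Prop :=
  (∀ ρ ∈ J, IsProbabilityMeasure (μ ρ)) ∧
    ∀ ρ ∈ J, ∀ s : ℕ,
      (Penv P μ ρ).map (fun tr : Traj => fun t : ℕ => tr (s + t)) = Penv P μ ρ

/-- (P.3): quenched and annealed monotonicity (stochastic domination). -/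
def MonotoneProp (P : Config → Measure Traj) (μ : ℝ → Measure Config) (J : Set ℝ) : Prop :=
  (∀ η₀' η₀ : Config, (∀ x, η₀' x ≤ η₀ x) →
      ∃ Q : Measure (Traj × Traj), IsCoupling (P η₀') (P η₀) Q ∧
        Q {p : Traj × Traj | ∀ t x, p.1 t x ≤ p.2 t x} = 1) ∧
    (∀ ρ' ρ : ℝ, ρ' ∈ J → ρ ∈ J → ρ' ≤ ρ →
      ∃ Q : Measure (Config × Config), IsCoupling (μ ρ') (μ ρ) Q ∧
        Q {p : Config × Config | ∀ x, p.1 x ≤ p.2 x} = 1)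

/-- (P.4): deviation bounds for the density at stationarity. -/
def DensityProp (P : Config → Measure Traj) (μ : ℝ → Measure Config) (J : Set ℝ) : Prop :=
  ∃ c₁ : ℝ, 0 < c₁ ∧
    ∀ ρ ∈ J, ∀ ε : ℝ, ε ∈ Set.Ioo (0 : ℝ) 1 → ∀ ℓ : ℕ, 1 ≤ ℓ →
      (Penv P μ ρ) {tr : Traj | ε * ℓ ≤ |(sumIcc (tr 0) 0 ((ℓ : ℤ) - 1) : ℝ) - ρ * ℓ|}
        ≤ ENNReal.ofReal (2 * Real.exp (-c₁ * ε ^ 2 * ℓ))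

/-! ## The coupling conditions (C.1), (C.2), (C.2.1), (C.2.2), (C.3) -/

/-- Every interval `I ⊆ [-H, H]` with `⌊ℓ/2⌋ ≤ |I| ≤ ℓ` carries empirical density at least `r`. -/
def IntervalDensityGE (η : Config) (H ℓ : ℕ) (r : ℝ) : Prop :=
  ∀ a b : ℤ, -(H : ℤ) ≤ a → b ≤ (H : ℤ) → ((ℓ / 2 : ℕ) : ℤ) ≤ b - a + 1 → b - a + 1 ≤ (ℓ : ℤ) →
    r * ((b - a + 1 : ℤ) : ℝ) ≤ (sumIcc η a b : ℝ)

/-- Every interval `I ⊆ [-H, H]` with `⌊ℓ/2⌋ ≤ |I| ≤ ℓ` carries empirical density at most `r`. -/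
def IntervalDensityLE (η : Config) (H ℓ : ℕ) (r : ℝ) : Prop :=
  ∀ a b : ℤ, -(H : ℤ) ≤ a → b ≤ (H : ℤ) → ((ℓ / 2 : ℕ) : ℤ) ≤ b - a + 1 → b - a + 1 ≤ (ℓ : ℤ) →
    (sumIcc η a b : ℝ) ≤ r * ((b - a + 1 : ℤ) : ℝ)

/-- (C.1): conservation of density. -/
def ConservationProp (ν : ℝ) (J : Set ℝ) (P : Config → Measure Traj) : Prop :=
  ∃ C₂ c₃ : ℝ, 0 < C₂ ∧ 0 < c₃ ∧
    ∀ ρ ∈ J, ∀ ε : ℝ, ε ∈ Set.Ioo (0 : ℝ) 1 → ρ + ε ∈ J →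
    ∀ ℓ ℓ' H t : ℕ, 1 ≤ ℓ → 1 ≤ ℓ' → 1 ≤ H → 1 ≤ t →
      (H : ℝ) > 4 * ν * t →
      4 * ν * t > C₂ * ℓ ^ 2 * ε⁻¹ ^ 2 * (1 + |Real.log (ν * t) ^ 3|) →
      (ℓ' : ℝ) ≤ Real.sqrt t →
    ∀ η₀ : Config,
      ((∀ a : ℤ, -(H : ℤ) ≤ a → a + ℓ - 1 ≤ (H : ℤ) →
          (sumIcc η₀ a (a + ℓ - 1) : ℝ) ≤ (ρ + ε) * ℓ) →
        1 - ENNReal.ofReal (4 * H * Real.exp (-c₃ * ε ^ 2 * ℓ')) ≤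
          (P η₀) {tr : Traj | ∀ a : ℤ,
            -(H : ℝ) + 2 * ν * t ≤ (a : ℝ) → ((a + ℓ' - 1 : ℤ) : ℝ) ≤ (H : ℝ) - 2 * ν * t →
            (sumIcc (tr t) a (a + ℓ' - 1) : ℝ) ≤ (ρ + 3 * ε) * ℓ'}) ∧
      ((∀ a : ℤ, -(H : ℤ) ≤ a → a + ℓ - 1 ≤ (H : ℤ) →
          (ρ - ε) * ℓ ≤ (sumIcc η₀ a (a + ℓ - 1) : ℝ)) →
        1 - ENNReal.ofReal (4 * H * Real.exp (-c₃ * ε ^ 2 * ℓ')) ≤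
          (P η₀) {tr : Traj | ∀ a : ℤ,
            -(H : ℝ) + 2 * ν * t ≤ (a : ℝ) → ((a + ℓ' - 1 : ℤ) : ℝ) ≤ (H : ℝ) - 2 * ν * t →
            (ρ - 3 * ε) * ℓ' ≤ (sumIcc (tr t) a (a + ℓ' - 1) : ℝ)})

/-- (C.2): couplings. -/
def CouplingsProp (ν : ℝ) (J : Set ℝ) (P : Config → Measure Traj) : Prop :=
  ∃ C₃ C₄ : ℝ, 0 < C₃ ∧ 0 < C₄ ∧
    ∀ ρ ∈ J, ∀ ε : ℝ, ε ∈ Set.Ioo (0 : ℝ) 1 → ρ + ε ∈ J →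
    ∀ H₁ H₂ t ℓ : ℕ, 1 ≤ H₁ → 1 ≤ H₂ → 1 ≤ t → 1 ≤ ℓ →
      min (H₁ : ℝ) ((H₂ : ℝ) - H₁ - 1) > 10 * ν * t →
      10 * ν * t > 4 * ν * (ℓ : ℝ) ^ 100 →
      4 * ν * (ℓ : ℝ) ^ 100 > C₃ →
      ν * ℓ > C₃ * ε⁻¹ ^ 2 * (1 + |Real.log (ν * ℓ ^ 4) ^ 3|) →
      (ℓ : ℝ) > 80 * ν * ε⁻¹ + ν⁻¹ ^ 2 →
    ∀ η₀ η₀' : Config, DomOn η₀' η₀ (-(H₁ : ℤ)) (H₁ : ℤ) →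
      IntervalDensityGE η₀ H₂ ℓ (ρ + 3 * ε / 4) →
      IntervalDensityLE η₀' H₂ ℓ (ρ + ε / 4) →
      ∃ Q : Measure (Traj × Traj), IsCoupling (P η₀) (P η₀') Q ∧
        1 - ENNReal.ofReal (20 * t * Real.exp (-(ν * t) / 4)) ≤
          Q {p : Traj × Traj | ∀ s ≤ t,
            DomOnR (p.2 s) (p.1 s) (-(H₁ : ℝ) + 4 * ν * t) ((H₁ : ℝ) - 4 * ν * t)} ∧
        1 - ENNReal.ofReal (5 * C₄ * ℓ ^ 4 * H₂ *
            Real.exp (-C₄⁻¹ * (ν / (ν + 1)) * ε ^ 2 * ℓ)) ≤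
          Q {p : Traj × Traj |
            DomOnR (p.2 t) (p.1 t) (-(H₂ : ℝ) + 6 * ν * t) ((H₂ : ℝ) - 6 * ν * t)}

/-- (C.2.1): no particle drifting in from the side. -/
def DriftProp (ν : ℝ) (P : Config → Measure Traj) : Prop :=
  ∀ t H : ℕ, ∀ k : ℕ, 1 ≤ k → ∀ η₀ η₀' : Config, DomOn η₀' η₀ (-(H : ℤ)) (H : ℤ) →
    ∃ Q : Measure (Traj × Traj), IsCoupling (P η₀) (P η₀') Q ∧
      1 - ENNReal.ofReal (20 * Real.exp (-(k * ν * t) / 4)) ≤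
        Q {p : Traj × Traj | ∀ s ≤ t,
          DomOnR (p.2 s) (p.1 s) (-(H : ℝ) + 2 * ν * k * t) ((H : ℝ) - 2 * ν * k * t)}

/-- (C.2.2): covering `η'` by `η`. -/
def CoveringProp (ν : ℝ) (J : Set ℝ) (P : Config → Measure Traj) : Prop :=
  ∃ C₅ C₄ : ℝ, 0 < C₅ ∧ 0 < C₄ ∧
    ∀ ρ ∈ J, ∀ ε : ℝ, ε ∈ Set.Ioo (0 : ℝ) 1 → ρ + ε ∈ J →
    ∀ H t : ℕ, 1 ≤ H → 1 ≤ t →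
      (H : ℝ) > 4 * ν * t → ν ^ 8 * t > 1 →
      ν * (t : ℝ) ^ ((1 : ℝ) / 4) > C₅ * ε⁻¹ ^ 2 * (1 + |Real.log (ν * t) ^ 3|) →
    ∀ η₀ η₀' : Config,
      IntervalDensityGE η₀ H (⌊(t : ℝ) ^ ((1 : ℝ) / 4)⌋₊) (ρ + 3 * ε / 4) →
      IntervalDensityLE η₀' H (⌊(t : ℝ) ^ ((1 : ℝ) / 4)⌋₊) (ρ + ε / 4) →
      ∃ Q : Measure (Traj × Traj), IsCoupling (P η₀) (P η₀') Q ∧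
        1 - ENNReal.ofReal (C₄ * t * H *
            Real.exp (-(C₄ * (1 + ν⁻¹))⁻¹ * ε ^ 2 * (t : ℝ) ^ ((1 : ℝ) / 4))) ≤
          Q {p : Traj × Traj |
            DomOnR (p.2 t) (p.1 t) (-(H : ℝ) + 4 * ν * t) ((H : ℝ) - 4 * ν * t)}

/-- (C.3): sprinkler. -/
noncomputable def SprinklerProp (ν : ℝ) (J : Set ℝ) (P : Config → Measure Traj)
    (pO pB : ℝ) : Prop :=
  ∃ c₆ C₇ : ℝ, 0 < c₆ ∧ 0 < C₇ ∧
    ∀ ρ ∈ J, ∀ H ℓ k : ℕ, 1 ≤ H → 1 ≤ ℓ → 1 ≤ k →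
      (H : ℝ) ≥ 2 * ν * ℓ * k → (k : ℝ) ≥ C₇ →
    ∀ η₀ η₀' : Config, DomOn η₀' η₀ (-(H : ℤ)) (H : ℤ) →
      sumIcc η₀' 0 (ℓ : ℤ) + 1 ≤ sumIcc η₀ 0 (ℓ : ℤ) →
      (sumIcc η₀' (-3 * ℓ + 1) (3 * ℓ) : ℝ) ≤ 6 * (ρ + 1) * ℓ →
    ∀ x : ℤ, x = 0 ∨ x = 1 →
      ∃ Q : Measure (Traj × Traj), IsCoupling (P η₀) (P η₀') Q ∧
        ENNReal.ofReal (2 * c₆ ^ (6 * (ρ + 1) * (ℓ : ℝ))) ≤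
          Q {p : Traj × Traj | 0 < p.1 ℓ x ∧ p.2 ℓ x = 0} ∧
        Q ({p : Traj × Traj | ∀ s ≤ ℓ,
            DomOnR (p.2 s) (p.1 s) (-(H : ℝ) + 2 * ν * k * ℓ) ((H : ℝ) - 2 * ν * k * ℓ)}ᶜ)
          ≤ ENNReal.ofReal (20 * Real.exp (-(k * ν * ℓ) / 4)) ∧
        20 * Real.exp (-(k * ν * ℓ) / 4) ≤
          c₆ ^ (6 * (ρ + 1) * (ℓ : ℝ)) * (pO * (1 - pB)) ^ (6 * (ρ + 1) * (ℓ : ℝ))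

/-! ## The random walk on the environment -/

/-- One-step transition probability of the walk: jump `d` from a site with `occ` particles. -/
noncomputable def stepProb (pO pB : ℝ) (occ : ℕ) (d : ℤ) : ℝ :=
  if d = 1 then (if occ = 0 then pO else pB)
  else if d = -1 then (if occ = 0 then 1 - pO else 1 - pB)
  else 0

/-- `Pw` is the family of quenched laws of the random walk (started at the origin) with
parameters `p_∘ = pO`, `p_• = pB`, characterised through its cylinder probabilities. -/
def IsQuenchedWalk (pO pB : ℝ) (Pw : Traj → Measure (ℕ → ℤ)) : Prop :=
  (∀ η : Traj, IsProbabilityMeasure (Pw η)) ∧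
    ∀ (η : Traj) (x : ℕ → ℤ) (n : ℕ),
      Pw η {ω : ℕ → ℤ | ∀ k ≤ n, ω k = x k} =
        if x 0 = 0 then
          ENNReal.ofReal (∏ k ∈ Finset.range n, stepProb pO pB (η k (x k)) (x (k + 1) - x k))
        else 0

/-- The annealed law of the walk at density `ρ`. -/
noncomputable def annWalk (P : Config → Measure Traj) (μ : ℝ → Measure Config)
    (Pw : Traj → Measure (ℕ → ℤ)) (ρ : ℝ) : Measure (ℕ → ℤ) :=
  (Penv P μ ρ).bind Pw

/-! ## Finite-range (resampled) environments -/

/-- `PL ρ L` is the law of the environment at density `ρ` resampled from `μ ρ` at every multiple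
of `L`: the blocks of length `L` are i.i.d. with the law of one block of the stationary
environment. -/
def IsFiniteRange (P : Config → Measure Traj) (μ : ℝ → Measure Config)
    (J : Set ℝ) (PL : ℝ → ℕ → Measure Traj) : Prop :=
  ∀ ρ ∈ J, ∀ L : ℕ, 1 ≤ L → ∀ K : ℕ,
    (PL ρ L).map (fun tr : Traj => fun (k : Fin K) (t : Fin L) (x : ℤ) => tr ((k : ℕ) * L + t) x)
      = Measure.pi (fun _ : Fin K =>
          (Penv P μ ρ).map (fun tr : Traj => fun (t : Fin L) (x : ℤ) => tr t x))

/-- `v(ρ, L) = E^{ρ,L}[X_L / L]`. -/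
noncomputable def vFin (PL : ℝ → ℕ → Measure Traj) (Pw : Traj → Measure (ℕ → ℤ))
    (ρ : ℝ) (L : ℕ) : ℝ :=
  ∫ ω, ((ω L : ℝ) / L) ∂((PL ρ L).bind Pw)

/-! ## The APCRW -/

/-- Law of one step of an environment particle: right w.p. `αq`, left w.p. `α(1-q)`,
stay w.p. `1-α`. -/
noncomputable def stepMeasure (α q : ℝ) : Measure ℤ :=
  ENNReal.ofReal (α * q) • Measure.dirac 1 + ENNReal.ofReal (α * (1 - q)) • Measure.dirac (-1)
    + ENNReal.ofReal (1 - α) • Measure.dirac 0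

/-- The particles of an initial configuration `η₀`. -/
def Particle (η₀ : Config) : Type := Σ x : ℤ, Fin (η₀ x)

/-- Given steps for every particle of `η₀`, the resulting trajectory of occupation numbers. -/
noncomputable def countConfig (η₀ : Config) (s : Particle η₀ × ℕ → ℤ) : Traj :=
  fun t x => Set.ncard {p : Particle η₀ | p.1 + ∑ k ∈ Finset.range t, s (p, k) = x}

/-- A measure on `ι → β` has i.i.d. marginals `m` (product measure on every finite subfamily). -/
def HasIIDMarginals {ι β : Type*} [MeasurableSpace β] (m : Measure β)
    (ν : Measure (ι → β)) : Prop :=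
  ∀ F : Finset ι, ν.map (fun s (i : F) => s i.1) = Measure.pi (fun _ : F => m)

/-- `P` is the family of quenched laws of the APCRW with activity `α` and drift parameter `q`:
starting from `η₀`, the particles of `η₀` perform i.i.d. lazy asymmetric random walks. -/
def IsAPCRW (α q : ℝ) (P : Config → Measure Traj) : Prop :=
  ∀ η₀ : Config, ∃ ν : Measure ((Particle η₀ × ℕ) → ℤ),
    IsProbabilityMeasure ν ∧ HasIIDMarginals (stepMeasure α q) ν ∧
      P η₀ = ν.map (countConfig η₀)

/-- The Poisson distribution with parameter `ρ` on `ℕ`. -/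
noncomputable def poissonMeasure (ρ : ℝ) : Measure ℕ :=
  Measure.sum (fun n : ℕ =>
    ENNReal.ofReal (Real.exp (-ρ) * ρ ^ n / n.factorial) • Measure.dirac n)

/-- `m = Poisson(ρ)^{⊗ℤ}`. -/
def IsPoissonProduct (ρ : ℝ) (m : Measure Config) : Prop :=
  HasIIDMarginals (poissonMeasure ρ) m

/-! ## Superpositions -/

/-- Annealed law of the superposition of `N` independent environments. -/
noncomputable def superAnnealed {N : ℕ} (Penvs : Fin N → Measure Traj) : Measure Traj :=
  (Measure.pi Penvs).map (fun trajs : Fin N → Traj => fun t x => ∑ i, trajs i t x)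

/-- Quenched law of the (componentwise) superposition of `N` independent environments. -/
noncomputable def superQuenched {N : ℕ} (P : Fin N → Config → Measure Traj)
    (η₀ : ℤ → Fin N → ℕ) : Measure (ℕ → ℤ → Fin N → ℕ) :=
  (Measure.pi (fun i => P i (fun x => η₀ x i))).map
    (fun trajs : Fin N → Traj => fun t x i => trajs i t x)

/-! ## Deterministic walk construction (arrows) -/

/-- The space-time lattice `𝕃`. -/
def LatL : Set (ℤ × ℤ) := {w : ℤ × ℤ | 0 ≤ w.2 ∧ (w.1 + w.2) % 2 = 0}

/-- The arrow at `w`, built from the environment `η` and the uniform numbers `u`. -/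
noncomputable def arrow (pO pB : ℝ) (η : ℕ → ℤ → ℕ) (u : ℤ × ℤ → ℝ) (w : ℤ × ℤ) : ℤ :=
  if u w ≤ (pO - pB) * (if η w.2.toNat w.1 = 0 then 1 else 0) + pB then 1 else -1

/-- The walk trajectory started from the space-time point `w`, driven by `η` and `u`. -/
noncomputable def walkTraj (pO pB : ℝ) (η : ℕ → ℤ → ℕ) (u : ℤ × ℤ → ℝ) (w : ℤ × ℤ) : ℕ → ℤ
  | 0 => w.1
  | k + 1 => walkTraj pO pB η u w k + arrow pO pB η u (walkTraj pO pB η u w k, w.2 + k)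

/-! ## Heat kernels -/

/-- `k`-step heat kernel of the non-lazy asymmetric walk (step `+1` w.p. `q`). -/
noncomputable def qbarK (q : ℝ) (k : ℕ) (z : ℤ) : ℝ :=
  if |z| ≤ (k : ℤ) ∧ ((k : ℤ) + z) % 2 = 0 then
    (k.choose (((k : ℤ) + z) / 2).toNat : ℝ) * q ^ ((((k : ℤ) + z) / 2).toNat)
      * (1 - q) ^ ((((k : ℤ) - z) / 2).toNat)
  else 0

/-- `t`-step heat kernel of the lazy asymmetric walk (laziness `1-α`, right step prob. `αq`). -/
noncomputable def lazyKernel (α q : ℝ) (t : ℕ) (x y : ℤ) : ℝ :=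
  ∑ k ∈ Finset.range (t + 1), (t.choose k : ℝ) * α ^ k * (1 - α) ^ (t - k) * qbarK q k (y - x)

/-- The exponential distribution with rate 1 on `ℝ`. -/
noncomputable def expMeasure1 : Measure ℝ :=
  volume.withDensity (fun x => ENNReal.ofReal (if 0 ≤ x then Real.exp (-x) else 0))


section AuxSuperposition

lemma aux_isProb_coupling {A B : Type*} [MeasurableSpace A] [MeasurableSpace B]
    {μ₁ : Measure A} {μ₂ : Measure B} {Q : Measure (A × B)}
    (h : IsCoupling μ₁ μ₂ Q) (h₁ : IsProbabilityMeasure μ₁) : IsProbabilityMeasure Q := by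
  constructor
  have h2 : Q.map Prod.fst Set.univ = 1 := by rw [h.1]; exact h₁.measure_univ
  rwa [Measure.map_apply measurable_fst MeasurableSet.univ, Set.preimage_univ] at h2

lemma aux_pi_map_comp {ι : Type*} [Fintype ι] {α β : Type*}
    [MeasurableSpace α] [MeasurableSpace β]
    (Q : ι → Measure α) (hQ : ∀ i, IsProbabilityMeasure (Q i)) {φ : α → β} (hφ : Measurable φ) :
    (Measure.pi Q).map (fun g (i : ι) => φ (g i)) = Measure.pi (fun i => (Q i).map φ) := by
  haveI := hQ
  haveI : ∀ i, IsProbabilityMeasure ((Q i).map φ) :=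
    fun i => Measure.isProbabilityMeasure_map hφ.aemeasurable
  refine (Measure.pi_eq fun s hs => ?_).symm
  have hmeas : Measurable (fun g : ι → α => fun i => φ (g i)) :=
    measurable_pi_lambda _ fun i => hφ.comp (measurable_pi_apply i)
  rw [Measure.map_apply hmeas (MeasurableSet.univ_pi hs)]
  have hpre : (fun g : ι → α => fun i => φ (g i)) ⁻¹' (Set.pi Set.univ s)
      = Set.pi Set.univ (fun i => φ ⁻¹' (s i)) := by
    ext g; simp [Set.mem_pi]
  rw [hpre, Measure.pi_pi]
  exact Finset.prod_congr rfl fun i _ => (Measure.map_apply hφ (hs i)).symm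

lemma aux_pi_eval {ι : Type*} [Fintype ι] [DecidableEq ι] {α : Type*} [MeasurableSpace α]
    (Q : ι → Measure α) (hQ : ∀ i, IsProbabilityMeasure (Q i)) (i : ι) (S : Set α) :
    Measure.pi Q (Function.eval i ⁻¹' S) = Q i S := by
  haveI := hQ
  rw [← Set.univ_pi_update_univ, Measure.pi_pi]
  rw [Finset.prod_eq_single i (fun j _ hj => by simp [Function.update_of_ne hj])
    (fun h => absurd (Finset.mem_univ i) h)]
  simp

end AuxSuperposition

set_option maxHeartbeats 1600000 in
/-- Proposition 2.1: a superposition of `N` independent environments each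
satisfying (P.1)-(P.4) and the sprinkler condition (C.3) satisfies the adapted sprinkler
condition for superposed environments. -/
theorem superposition_sprinkler
    (N : ℕ) (hN : 0 < N)
    (a b νs : Fin N → ℝ) (hab : ∀ i, 0 < a i ∧ a i < b i) (hν : ∀ i, 0 < νs i)
    (pO pB : ℝ) (hpO : pO ∈ Set.Ioo (0 : ℝ) 1) (hpB : pB ∈ Set.Ioo (0 : ℝ) 1) (hp : pO < pB)
    (P : Fin N → Config → Measure Traj) (μ : Fin N → ℝ → Measure Config)
    (hP1 : ∀ i, MarkovProp (P i))
    (hP2 : ∀ i, StationaryProp (P i) (μ i) (Set.Ioo (a i) (b i)))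
    (hP3 : ∀ i, MonotoneProp (P i) (μ i) (Set.Ioo (a i) (b i)))
    (hP4 : ∀ i, DensityProp (P i) (μ i) (Set.Ioo (a i) (b i)))
    (hC3 : ∀ i, SprinklerProp (νs i) (Set.Ioo (a i) (b i)) (P i) pO pB) :
    ∃ c₆ : ℝ, 0 < c₆ ∧ ∃ C₇ : ℝ,
      C₇ ≥ 4 * (Real.log (20 * N) + 6 * ∑ i, (b i + 1)) /
        (Finset.univ.inf' ⟨⟨0, hN⟩, Finset.mem_univ _⟩ νs) ∧
      ∀ ρ : Fin N → ℝ, (∀ i, ρ i ∈ Set.Ioo (a i) (b i)) →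
      ∀ H ℓ k : ℕ, 1 ≤ H → 1 ≤ ℓ → 1 ≤ k → (k : ℝ) ≥ C₇ →
        (∀ i, (H : ℝ) ≥ 2 * νs i * ℓ * k) →
      ∀ η₀ η₀' : ℤ → Fin N → ℕ,
        (∀ i, DomOn (fun x => η₀' x i) (fun x => η₀ x i) (-(H : ℤ)) (H : ℤ)) →
        (∀ i, sumIcc (fun x => η₀' x i) 0 (ℓ : ℤ) + 1 ≤ sumIcc (fun x => η₀ x i) 0 (ℓ : ℤ)) →
        (∀ i, (sumIcc (fun x => η₀' x i) (-3 * ℓ + 1) (3 * ℓ) : ℝ) ≤ 6 * (ρ i + 1) * ℓ) →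
      ∀ x : ℤ, x = 0 ∨ x = 1 →
      ∃ Q : Measure ((ℕ → ℤ → Fin N → ℕ) × (ℕ → ℤ → Fin N → ℕ)),
        IsCoupling (superQuenched P η₀) (superQuenched P η₀') Q ∧
        ENNReal.ofReal (2 * c₆ ^ (6 * (∑ i, (ρ i + 1)) * (ℓ : ℝ))) ≤
          Q {p : (ℕ → ℤ → Fin N → ℕ) × (ℕ → ℤ → Fin N → ℕ) |
              (∃ i, 0 < p.1 ℓ x i) ∧ (∀ i, p.2 ℓ x i = 0)} ∧
        Q (⋃ i, {p : (ℕ → ℤ → Fin N → ℕ) × (ℕ → ℤ → Fin N → ℕ) | ∀ s ≤ ℓ,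
            DomOnR (fun y => p.2 s y i) (fun y => p.1 s y i)
              (-(H : ℝ) + 2 * νs i * k * ℓ) ((H : ℝ) - 2 * νs i * k * ℓ)}ᶜ) ≤
          ENNReal.ofReal (20 * N *
            Real.exp (-((k : ℝ) * (Finset.univ.inf' ⟨⟨0, hN⟩, Finset.mem_univ _⟩ νs) * ℓ) / 4)) ∧
        20 * N * Real.exp (-((k : ℝ) * (Finset.univ.inf' ⟨⟨0, hN⟩, Finset.mem_univ _⟩ νs) * ℓ) / 4)
          ≤ c₆ ^ (6 * (∑ i, (ρ i + 1)) * (ℓ : ℝ)) *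
              (pO * (1 - pB)) ^ (6 * (∑ i, (ρ i + 1)) * (ℓ : ℝ)) := by
  classical
  have hne : (Finset.univ : Finset (Fin N)).Nonempty := ⟨⟨0, hN⟩, Finset.mem_univ _⟩
  set νmin : ℝ := Finset.univ.inf' ⟨⟨0, hN⟩, Finset.mem_univ _⟩ νs with hνmin_def
  have hνmin0 : 0 < νmin := by
    obtain ⟨j, -, hj⟩ := Finset.exists_mem_eq_inf'
      (⟨⟨0, hN⟩, Finset.mem_univ _⟩ : (Finset.univ : Finset (Fin N)).Nonempty) νs
    rw [hνmin_def, hj]; exact hν j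
  have hνminle : ∀ i, νmin ≤ νs i := fun i => Finset.inf'_le _ (Finset.mem_univ i)
  choose c C hc hCpos hS using hC3
  set β : ℝ := pO * (1 - pB) with hβ_def
  have hβ0 : 0 < β := mul_pos hpO.1 (by linarith [hpB.2])
  have hβ1 : β ≤ 1 := by nlinarith [hpO.1.le, hpO.2.le, hpB.1.le, hpB.2.le]
  set c₆ : ℝ := min (Finset.univ.inf' hne c) 1 with hc₆_def
  have hc₆0 : 0 < c₆ := lt_min (by rw [Finset.lt_inf'_iff]; exact fun i _ => hc i) one_pos
  have hc₆1 : c₆ ≤ 1 := min_le_right _ _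
  have hc₆le : ∀ i, c₆ ≤ c i :=
    fun i => (min_le_left _ _).trans (Finset.inf'_le _ (Finset.mem_univ i))
  set B : ℝ := ∑ i, (b i + 1) with hB_def
  have hB0 : 0 ≤ B := Finset.sum_nonneg fun i _ => by linarith [(hab i).1, (hab i).2]
  set γ : ℝ := c₆ * β with hγ_def
  have hγ0 : 0 < γ := mul_pos hc₆0 hβ0
  have hγ1 : γ ≤ 1 := by nlinarith
  set M : ℝ := max 1 (-Real.log γ) with hM_def
  have hM1 : (1:ℝ) ≤ M := le_max_left _ _
  have hMγ : -Real.log γ ≤ M := le_max_right _ _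
  have hN1 : (1:ℝ) ≤ (N:ℝ) := by exact_mod_cast hN
  have hlog20N : (0:ℝ) ≤ Real.log (20 * N) := Real.log_nonneg (by nlinarith)
  refine ⟨c₆, hc₆0,
    max (Finset.univ.sup' hne C) (4 * (Real.log (20 * N) + 6 * B * M) / νmin), ?_, ?_⟩
  · have h1 : 4 * (Real.log (20 * (N:ℝ)) + 6 * B) ≤ 4 * (Real.log (20 * N) + 6 * B * M) := by
      nlinarith
    exact le_trans ((div_le_div_iff_of_pos_right hνmin0).mpr h1) (le_max_right _ _)
  · intro ρ hρ H ℓ k hH hℓ hk hkC hHν η₀ η₀' hdom hsum hbd x hx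
    have hkC' : ∀ i, (k:ℝ) ≥ C i := fun i =>
      le_trans (le_trans (Finset.le_sup' C (Finset.mem_univ i)) (le_max_left _ _)) hkC
    have hQex := fun i => hS i (ρ i) (hρ i) H ℓ k hH hℓ hk (hHν i) (hkC' i)
      (fun y => η₀ y i) (fun y => η₀' y i) (hdom i) (hsum i) (hbd i) x hx
    choose Q hcoup hQ1 hQ2 hQ3 using hQex
    have hprob : ∀ i, IsProbabilityMeasure (Q i) :=
      fun i => aux_isProb_coupling (hcoup i) ((hP1 i).1 _)
    haveI := hprob
    set f : (Fin N → Traj × Traj) → (ℕ → ℤ → Fin N → ℕ) × (ℕ → ℤ → Fin N → ℕ) :=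
      fun g => (fun t y i => (g i).1 t y, fun t y i => (g i).2 t y) with hf_def
    have hev : ∀ i : Fin N, Measurable (fun g : Fin N → Traj × Traj => g i) :=
      fun i => measurable_pi_apply i
    have hf : Measurable f := by
      refine Measurable.prod ?_ ?_
      · exact measurable_pi_lambda _ fun t => measurable_pi_lambda _ fun y =>
          measurable_pi_lambda _ fun i =>
            ((measurable_pi_apply y).comp ((measurable_pi_apply t).comp
              (measurable_fst.comp (hev i))))
      · exact measurable_pi_lambda _ fun t => measurable_pi_lambda _ fun y =>
          measurable_pi_lambda _ fun i =>
            ((measurable_pi_apply y).comp ((measurable_pi_apply t).comp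
              (measurable_snd.comp (hev i))))
    refine ⟨(Measure.pi Q).map f, ?_, ?_, ?_, ?_⟩
    · -- coupling
      have htr : Measurable (fun trajs : Fin N → Traj => fun (t : ℕ) (y : ℤ) (i : Fin N) =>
          trajs i t y) :=
        measurable_pi_lambda _ fun t => measurable_pi_lambda _ fun y =>
          measurable_pi_lambda _ fun i =>
            ((measurable_pi_apply y).comp ((measurable_pi_apply t).comp (measurable_pi_apply i)))
      constructor
      · have hπ : Measurable (fun g : Fin N → Traj × Traj => fun i => (g i).1) :=
          measurable_pi_lambda _ fun i => measurable_fst.comp (measurable_pi_apply i)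
        rw [Measure.map_map measurable_fst hf]
        have hcomp : (Prod.fst ∘ f) = (fun trajs : Fin N → Traj =>
            fun (t : ℕ) (y : ℤ) (i : Fin N) => trajs i t y) ∘
            (fun g (i : Fin N) => Prod.fst (g i)) := rfl
        rw [hcomp, ← Measure.map_map htr hπ, aux_pi_map_comp Q hprob measurable_fst]
        have hPe : (fun i => (Q i).map Prod.fst) = (fun i => P i (fun y => η₀ y i)) :=
          funext fun i => (hcoup i).1
        rw [hPe]; rfl
      · have hπ : Measurable (fun g : Fin N → Traj × Traj => fun i => (g i).2) :=
          measurable_pi_lambda _ fun i => measurable_snd.comp (measurable_pi_apply i)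
        rw [Measure.map_map measurable_snd hf]
        have hcomp : (Prod.snd ∘ f) = (fun trajs : Fin N → Traj =>
            fun (t : ℕ) (y : ℤ) (i : Fin N) => trajs i t y) ∘
            (fun g (i : Fin N) => Prod.snd (g i)) := rfl
        rw [hcomp, ← Measure.map_map htr hπ, aux_pi_map_comp Q hprob measurable_snd]
        have hPe : (fun i => (Q i).map Prod.snd) = (fun i => P i (fun y => η₀' y i)) :=
          funext fun i => (hcoup i).2
        rw [hPe]; rfl
    · -- first bound
      have hρ1 : ∀ i, (0:ℝ) ≤ ρ i + 1 := fun i => by linarith [(hρ i).1, (hab i).1]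
      have he_nonneg : ∀ i, (0:ℝ) ≤ 6 * (ρ i + 1) * (ℓ:ℝ) := fun i =>
        mul_nonneg (by nlinarith [hρ1 i]) (Nat.cast_nonneg ℓ)
      have hreal : 2 * c₆ ^ (6 * (∑ i, (ρ i + 1)) * (ℓ:ℝ)) ≤
          ∏ i, (2 * c i ^ (6 * (ρ i + 1) * (ℓ:ℝ))) := by
        have h1 : ∏ i, c₆ ^ (6 * (ρ i + 1) * (ℓ:ℝ)) ≤ ∏ i, c i ^ (6 * (ρ i + 1) * (ℓ:ℝ)) :=
          Finset.prod_le_prod (fun i _ => Real.rpow_nonneg hc₆0.le _)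
            (fun i _ => Real.rpow_le_rpow hc₆0.le (hc₆le i) (he_nonneg i))
        have h2 : c₆ ^ (6 * (∑ i, (ρ i + 1)) * (ℓ:ℝ)) =
            ∏ i, c₆ ^ (6 * (ρ i + 1) * (ℓ:ℝ)) := by
          rw [← Real.rpow_sum_of_pos hc₆0]
          congr 1
          rw [Finset.mul_sum, Finset.sum_mul]
        have h3 : (2:ℝ) ≤ 2 ^ N := by
          calc (2:ℝ) = 2 ^ 1 := (pow_one 2).symm
          _ ≤ 2 ^ N := pow_le_pow_right₀ one_le_two hN
        have h4 : ∏ i, (2 * c i ^ (6 * (ρ i + 1) * (ℓ:ℝ))) =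
            2 ^ N * ∏ i, c i ^ (6 * (ρ i + 1) * (ℓ:ℝ)) := by
          rw [Finset.prod_mul_distrib, Finset.prod_const, Finset.card_univ, Fintype.card_fin]
        have h5 : (0:ℝ) ≤ ∏ i, c₆ ^ (6 * (ρ i + 1) * (ℓ:ℝ)) :=
          Finset.prod_nonneg fun i _ => Real.rpow_nonneg hc₆0.le _
        rw [h4, h2]
        nlinarith [h1, h5]
      calc ENNReal.ofReal (2 * c₆ ^ (6 * (∑ i, (ρ i + 1)) * (ℓ:ℝ)))
          ≤ ENNReal.ofReal (∏ i, (2 * c i ^ (6 * (ρ i + 1) * (ℓ:ℝ)))) :=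
            ENNReal.ofReal_le_ofReal hreal
        _ = ∏ i, ENNReal.ofReal (2 * c i ^ (6 * (ρ i + 1) * (ℓ:ℝ))) :=
            ENNReal.ofReal_prod_of_nonneg fun i _ =>
              mul_nonneg (by norm_num) (Real.rpow_nonneg (hc i).le _)
        _ ≤ ∏ i, Q i {p : Traj × Traj | 0 < p.1 ℓ x ∧ p.2 ℓ x = 0} :=
            Finset.prod_le_prod' fun i _ => hQ1 i
        _ = Measure.pi Q (Set.pi Set.univ
              (fun _ => {p : Traj × Traj | 0 < p.1 ℓ x ∧ p.2 ℓ x = 0})) :=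
            (Measure.pi_pi Q _).symm
        _ ≤ Measure.pi Q (f ⁻¹' {p : (ℕ → ℤ → Fin N → ℕ) × (ℕ → ℤ → Fin N → ℕ) |
              (∃ i, 0 < p.1 ℓ x i) ∧ (∀ i, p.2 ℓ x i = 0)}) := by
            refine measure_mono ?_
            intro g hg
            simp only [Set.mem_pi, Set.mem_univ, forall_true_left, Set.mem_setOf_eq] at hg
            exact ⟨⟨⟨0, hN⟩, (hg ⟨0, hN⟩).1⟩, fun i => (hg i).2⟩
        _ ≤ ((Measure.pi Q).map f) _ := Measure.le_map_apply hf.aemeasurable _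
    · -- second bound
      have hGmeas : ∀ i : Fin N, MeasurableSet {p : (ℕ → ℤ → Fin N → ℕ) × (ℕ → ℤ → Fin N → ℕ) |
          ∀ s ≤ ℓ, DomOnR (fun y => p.2 s y i) (fun y => p.1 s y i)
            (-(H:ℝ) + 2 * νs i * k * ℓ) ((H:ℝ) - 2 * νs i * k * ℓ)} := by
        intro i
        have heq : {p : (ℕ → ℤ → Fin N → ℕ) × (ℕ → ℤ → Fin N → ℕ) |
            ∀ s ≤ ℓ, DomOnR (fun y => p.2 s y i) (fun y => p.1 s y i)
              (-(H:ℝ) + 2 * νs i * k * ℓ) ((H:ℝ) - 2 * νs i * k * ℓ)} =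
            ⋂ (s : ℕ), ⋂ (_ : s ≤ ℓ), ⋂ (y : ℤ),
              ⋂ (_ : -(H:ℝ) + 2 * νs i * k * ℓ ≤ (y:ℝ)), ⋂ (_ : (y:ℝ) ≤ (H:ℝ) - 2 * νs i * k * ℓ),
              {p : (ℕ → ℤ → Fin N → ℕ) × (ℕ → ℤ → Fin N → ℕ) | p.2 s y i ≤ p.1 s y i} := by
          ext p; simp [DomOnR]
        rw [heq]
        refine MeasurableSet.iInter fun s => MeasurableSet.iInter fun _ =>
          MeasurableSet.iInter fun y => MeasurableSet.iInter fun _ =>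
          MeasurableSet.iInter fun _ => measurableSet_le ?_ ?_
        · exact (measurable_pi_apply i).comp ((measurable_pi_apply y).comp
            ((measurable_pi_apply s).comp measurable_snd))
        · exact (measurable_pi_apply i).comp ((measurable_pi_apply y).comp
            ((measurable_pi_apply s).comp measurable_fst))
      rw [Measure.map_apply hf (MeasurableSet.iUnion fun i => (hGmeas i).compl),
        Set.preimage_iUnion]
      refine le_trans (measure_iUnion_le _) ?_
      have hpre : ∀ i : Fin N, f ⁻¹' ({p : (ℕ → ℤ → Fin N → ℕ) × (ℕ → ℤ → Fin N → ℕ) |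
          ∀ s ≤ ℓ, DomOnR (fun y => p.2 s y i) (fun y => p.1 s y i)
            (-(H:ℝ) + 2 * νs i * k * ℓ) ((H:ℝ) - 2 * νs i * k * ℓ)}ᶜ) =
          Function.eval i ⁻¹' ({p : Traj × Traj | ∀ s ≤ ℓ, DomOnR (p.2 s) (p.1 s)
            (-(H:ℝ) + 2 * νs i * k * ℓ) ((H:ℝ) - 2 * νs i * k * ℓ)}ᶜ) := fun i => rfl
      calc ∑' (i : Fin N), Measure.pi Q (f ⁻¹' _)
          = ∑' (i : Fin N), Q i ({p : Traj × Traj | ∀ s ≤ ℓ, DomOnR (p.2 s) (p.1 s)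
              (-(H:ℝ) + 2 * νs i * k * ℓ) ((H:ℝ) - 2 * νs i * k * ℓ)}ᶜ) := by
            refine tsum_congr fun i => ?_
            rw [hpre i, aux_pi_eval Q hprob]
        _ ≤ ∑' (i : Fin N), ENNReal.ofReal (20 * Real.exp (-((k:ℝ) * νs i * ℓ) / 4)) :=
            ENNReal.tsum_le_tsum fun i => hQ2 i
        _ = ENNReal.ofReal (∑ i, 20 * Real.exp (-((k:ℝ) * νs i * ℓ) / 4)) := by
            rw [tsum_fintype, ENNReal.ofReal_sum_of_nonneg fun i _ =>
              mul_nonneg (by norm_num) (Real.exp_nonneg _)]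
        _ ≤ ENNReal.ofReal (20 * N * Real.exp (-((k:ℝ) * νmin * ℓ) / 4)) := by
            refine ENNReal.ofReal_le_ofReal ?_
            have hterm : ∀ i : Fin N, 20 * Real.exp (-((k:ℝ) * νs i * ℓ) / 4) ≤
                20 * Real.exp (-((k:ℝ) * νmin * ℓ) / 4) := by
              intro i
              have hk0 : (0:ℝ) ≤ (k:ℝ) := Nat.cast_nonneg k
              have hl0 : (0:ℝ) ≤ (ℓ:ℝ) := Nat.cast_nonneg ℓ
              have : (k:ℝ) * νmin * ℓ ≤ (k:ℝ) * νs i * ℓ :=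
                mul_le_mul_of_nonneg_right
                  (mul_le_mul_of_nonneg_left (hνminle i) hk0) hl0
              have := Real.exp_le_exp.mpr (by linarith : -((k:ℝ) * νs i * ℓ) / 4 ≤
                -((k:ℝ) * νmin * ℓ) / 4)
              linarith
            calc ∑ i, 20 * Real.exp (-((k:ℝ) * νs i * ℓ) / 4)
                ≤ ∑ _i : Fin N, 20 * Real.exp (-((k:ℝ) * νmin * ℓ) / 4) :=
                  Finset.sum_le_sum fun i _ => hterm i
              _ = 20 * N * Real.exp (-((k:ℝ) * νmin * ℓ) / 4) := by
                  rw [Finset.sum_const, Finset.card_univ, Fintype.card_fin, nsmul_eq_mul]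
                  ring
    · -- third bound (real arithmetic)
      have hℓ1 : (1:ℝ) ≤ (ℓ:ℝ) := by exact_mod_cast hℓ
      have hℓ0 : (0:ℝ) ≤ (ℓ:ℝ) := by linarith
      have hSB : (∑ i, (ρ i + 1)) ≤ B := Finset.sum_le_sum fun i _ => by linarith [(hρ i).2]
      have hS0 : (0:ℝ) ≤ ∑ i, (ρ i + 1) :=
        Finset.sum_nonneg fun i _ => by linarith [(hρ i).1, (hab i).1]
      have hEB : 6 * (∑ i, (ρ i + 1)) * (ℓ:ℝ) ≤ 6 * B * (ℓ:ℝ) := by nlinarith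
      have hγE : γ ^ (6 * B * (ℓ:ℝ)) ≤ γ ^ (6 * (∑ i, (ρ i + 1)) * (ℓ:ℝ)) :=
        Real.rpow_le_rpow_of_exponent_ge hγ0 hγ1 hEB
      have hkνmin : Real.log (20 * N) + 6 * B * M ≤ (k:ℝ) * νmin / 4 := by
        have h1 : 4 * (Real.log (20 * N) + 6 * B * M) / νmin ≤ (k:ℝ) :=
          le_trans (le_max_right _ _) hkC
        have h2 : 4 * (Real.log (20 * N) + 6 * B * M) ≤ (k:ℝ) * νmin :=
          (div_le_iff₀ hνmin0).mp h1
        linarith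
      have h20N : (0:ℝ) < 20 * N := by nlinarith
      rw [← Real.mul_rpow hc₆0.le hβ0.le]
      refine le_trans ?_ hγE
      rw [Real.rpow_def_of_pos hγ0, ← Real.exp_log h20N, ← Real.exp_add]
      refine Real.exp_le_exp.mpr ?_
      have h6Bℓ : (0:ℝ) ≤ 6 * B * (ℓ:ℝ) := by nlinarith
      have hMprod : 6 * B * (ℓ:ℝ) * (-Real.log γ) ≤ 6 * B * (ℓ:ℝ) * M :=
        mul_le_mul_of_nonneg_left hMγ h6Bℓ
      have hstep : Real.log (20 * N) + 6 * B * (ℓ:ℝ) * M ≤ (k:ℝ) * νmin * (ℓ:ℝ) / 4 := by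
        have h := mul_le_mul_of_nonneg_left hkνmin hℓ0
        nlinarith [mul_nonneg (sub_nonneg.mpr hℓ1) hlog20N]
      nlinarith [hMprod, hstep]
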